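/- Let H be a finite simple graph with e = e(H) ≥ 1 edges, let l > 0, and let k : [0,1]² → ℝ be a symmetric measurable function with |k| ≤ l. If either k ≥ 0 everywhere or e is an even positive integer, then t(H, k) ≤ ∬_{[0,1]²} k(x,y)^e dx dy, where t(H, k) = ∫_{[0,1]^{V(H)}} ∏_{(i,j)∈E(H)} k(x_i, x_j) ∏_{i∈V(H)} dx_i. Moreover equality holds when k is a constant function. -/

import Mathlib

open MeasureTheory Filter Set
open scoped ENNReal Topology

noncomputable section

/-- Lebesgue measure on the unit cube `[0,1]^v`. -/
def cube (v : ℕ) : Measure (Fin v → ℝ) :=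
  Measure.pi fun _ => volume.restrict (Icc (0:ℝ) 1)

/-- Homomorphism density `t(H,k)` of a finite simple graph `H` in a kernel `k`. -/
def homDensity {v : ℕ} (G : SimpleGraph (Fin v)) [DecidableRel G.Adj]
    (k : ℝ → ℝ → ℝ) : ℝ :=
  ∫ x : Fin v → ℝ, (∏ e ∈ G.edgeFinset, k (x e.inf) (x e.sup)) ∂(cube v)

instance cube_prob (v : ℕ) : IsProbabilityMeasure (cube v) := by
  have : IsProbabilityMeasure (volume.restrict (Icc (0:ℝ) 1)) := ⟨by simp [Real.volume_Icc]⟩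
  unfold cube; infer_instance

lemma cube_map_pair {v : ℕ} {i j : Fin v} (hij : i ≠ j) :
    (cube v).map (fun x => (x i, x j))
      = (volume.restrict (Icc (0:ℝ) 1)).prod (volume.restrict (Icc (0:ℝ) 1)) := by
  set ν := volume.restrict (Icc (0:ℝ) 1) with hν
  have hν1 : ν univ = 1 := by simp [hν, Real.volume_Icc]
  refine (Measure.prod_eq (μ := ν) (ν := ν) fun s t hs ht => ?_).symm
  rw [Measure.map_apply (by fun_prop) (hs.prod ht)]
  have hpre : (fun x : Fin v → ℝ => (x i, x j)) ⁻¹' (s ×ˢ t)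
      = Set.pi univ (Function.update (Function.update (fun _ => (univ : Set ℝ)) i s) j t) := by
    ext x
    simp only [mem_preimage, mem_prod, Set.mem_pi, mem_univ, forall_true_left]
    constructor
    · rintro ⟨h1, h2⟩ m
      rcases eq_or_ne m j with rfl | hmj
      · simpa using h2
      rcases eq_or_ne m i with rfl | hmi
      · simpa [Function.update_of_ne hij] using h1
      · simp [Function.update_of_ne hmj, Function.update_of_ne hmi]
    · intro h
      refine ⟨?_, ?_⟩
      · have := h i; simpa [Function.update_of_ne hij] using this
      · have := h j; simpa using this
  rw [hpre, cube, Measure.pi_pi]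
  have hfun : (fun m => ν (Function.update (Function.update (fun _ => (univ : Set ℝ)) i s) j t m))
      = Function.update (Function.update (fun _ => ν univ) i (ν s)) j (ν t) := by
    funext m
    simp only [Function.apply_update (fun _ r => ν r)]
  show ∏ m, ν (Function.update (Function.update (fun _ => (univ : Set ℝ)) i s) j t m) = ν s * ν t
  rw [hfun]
  rw [Finset.prod_update_of_mem (Finset.mem_univ j)]
  rw [Finset.sdiff_singleton_eq_erase,
    Finset.prod_update_of_mem (Finset.mem_erase.mpr ⟨hij, Finset.mem_univ i⟩)]
  simp [hν1, mul_comm]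

lemma lintegral_cube_pair {v : ℕ} {i j : Fin v} (hij : i ≠ j) {F : ℝ × ℝ → ℝ≥0∞}
    (hF : Measurable F) :
    ∫⁻ x, F (x i, x j) ∂cube v = ∫⁻ p in (Icc (0:ℝ) 1) ×ˢ (Icc (0:ℝ) 1), F p := by
  have hm : Measurable fun x : Fin v → ℝ => (x i, x j) := by fun_prop
  rw [← lintegral_map hF hm, cube_map_pair hij, Measure.prod_restrict,
    ← Measure.volume_eq_prod]

/-- **Lemma (Hölder bound for homomorphism densities).**
For a finite simple graph `H` with `e = e(H) ≥ 1` edges and a symmetric measurable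
kernel `k` with `|k| ≤ l`, if `k ≥ 0` everywhere or `e` is even, then
`t(H,k) ≤ ∬_{[0,1]²} k(x,y)^e dx dy`, with equality for constant kernels. -/
theorem homDensity_le_edge_moment
    (v : ℕ) (G : SimpleGraph (Fin v)) [DecidableRel G.Adj]
    (l : ℝ) (hl : 0 < l) (k : ℝ → ℝ → ℝ)
    (hkMeas : Measurable (Function.uncurry k))
    (hkSymm : ∀ x y, k x y = k y x)
    (hkBdd : ∀ x y, |k x y| ≤ l)
    (he : 1 ≤ G.edgeFinset.card)
    (hsign : (∀ x y, 0 ≤ k x y) ∨ Even G.edgeFinset.card) :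
    (homDensity G k
        ≤ ∫ p in (Icc (0:ℝ) 1) ×ˢ (Icc (0:ℝ) 1), (k p.1 p.2) ^ G.edgeFinset.card) ∧
    (∀ c : ℝ, homDensity G (fun _ _ => c)
        = ∫ p in (Icc (0:ℝ) 1) ×ˢ (Icc (0:ℝ) 1),
            ((fun _ _ => c) p.1 p.2 : ℝ) ^ G.edgeFinset.card) := by
  classical
  have hvol : volume ((Icc (0:ℝ) 1) ×ˢ (Icc (0:ℝ) 1)) = 1 := by
    rw [Measure.volume_eq_prod, Measure.prod_prod]; simp [Real.volume_Icc]
  set n := G.edgeFinset.card with hn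
  have hn0 : (n:ℝ) ≠ 0 := Nat.cast_ne_zero.mpr (by omega)
  constructor
  · -- main inequality
    set S := (Icc (0:ℝ) 1) ×ˢ (Icc (0:ℝ) 1) with hS
    have hedge : ∀ e ∈ G.edgeFinset, (Sym2.inf e : Fin v) ≠ Sym2.sup e := by
      intro e heE hc
      have hd : ¬ e.IsDiag := by
        have := SimpleGraph.mem_edgeFinset.mp heE
        exact G.not_isDiag_of_mem_edgeSet this
      induction e with
      | _ a b =>
        exact hd (Sym2.mk_isDiag_iff.mpr (inf_eq_sup.mp hc))
    have hmk : ∀ e ∈ G.edgeFinset, Measurable fun x : Fin v → ℝ => k (x e.inf) (x e.sup) := by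
      intro e _
      exact hkMeas.comp ((by fun_prop : Measurable fun x : Fin v → ℝ => (x e.inf, x e.sup)))
    set F : ℝ × ℝ → ℝ≥0∞ := fun p => ENNReal.ofReal (|k p.1 p.2| ^ n) with hF
    have hFmeas : Measurable F := by
      have : Measurable fun p : ℝ × ℝ => k p.1 p.2 := hkMeas
      exact (this.abs.pow_const n).ennreal_ofReal
    set A := ∫⁻ p in S, F p with hA
    have hAe : ∀ e ∈ G.edgeFinset, (∫⁻ x : Fin v → ℝ, F (x e.inf, x e.sup) ∂cube v) = A :=
      fun e heE => lintegral_cube_pair (hedge e heE) hFmeas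
    set L := ∫⁻ x : Fin v → ℝ, ∏ e ∈ G.edgeFinset,
        ENNReal.ofReal |k (x e.inf) (x e.sup)| ∂cube v with hL
    have hHolder : L ≤ A := by
      have h1 : ∀ x : Fin v → ℝ, ∏ e ∈ G.edgeFinset, ENNReal.ofReal |k (x e.inf) (x e.sup)|
          = ∏ e ∈ G.edgeFinset, (F (x e.inf, x e.sup)) ^ ((n:ℝ)⁻¹) := by
        intro x
        refine Finset.prod_congr rfl fun e _ => ?_
        rw [hF]
        simp only
        rw [ENNReal.ofReal_pow (abs_nonneg _), ← ENNReal.rpow_natCast, ← ENNReal.rpow_mul,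
          mul_inv_cancel₀ hn0, ENNReal.rpow_one]
      calc L = ∫⁻ x : Fin v → ℝ, ∏ e ∈ G.edgeFinset, (F (x e.inf, x e.sup)) ^ ((n:ℝ)⁻¹)
            ∂cube v := lintegral_congr h1
        _ ≤ ∏ e ∈ G.edgeFinset, (∫⁻ x : Fin v → ℝ, F (x e.inf, x e.sup) ∂cube v) ^ ((n:ℝ)⁻¹) := by
            refine ENNReal.lintegral_prod_norm_pow_le _ (fun e heE => ?_) ?_ (fun e _ => by positivity)
            · exact (hFmeas.comp ((by fun_prop : Measurable fun x : Fin v → ℝ => (x e.inf, x e.sup)))).aemeasurable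
            · rw [Finset.sum_const, nsmul_eq_mul, mul_inv_cancel₀ hn0]
        _ = ∏ _e ∈ G.edgeFinset, A ^ ((n:ℝ)⁻¹) :=
            Finset.prod_congr rfl fun e heE => by rw [hAe e heE]
        _ = A := by
            rw [Finset.prod_const, ← hn, ← ENNReal.rpow_natCast _ n, ← ENNReal.rpow_mul,
              inv_mul_cancel₀ hn0, ENNReal.rpow_one]
    have hAlt : A ≠ ∞ := by
      refine ne_top_of_le_ne_top (b := ENNReal.ofReal (l ^ n) * volume S) ?_ ?_
      · exact ENNReal.mul_ne_top ENNReal.ofReal_ne_top (by rw [hS, hvol]; exact ENNReal.one_ne_top)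
      · rw [hA]
        calc (∫⁻ p in S, F p) ≤ ∫⁻ _ in S, ENNReal.ofReal (l ^ n) := by
              refine lintegral_mono fun p => ENNReal.ofReal_le_ofReal ?_
              exact pow_le_pow_left₀ (abs_nonneg _) (hkBdd _ _) n
          _ = ENNReal.ofReal (l ^ n) * volume S := by rw [setLIntegral_const]
    set g : (Fin v → ℝ) → ℝ := fun x => ∏ e ∈ G.edgeFinset, |k (x e.inf) (x e.sup)| with hg
    have hgmeas : Measurable g := Finset.measurable_prod _ fun e heE => (hmk e heE).abs
    have hstep1 : homDensity G k ≤ ∫ x, g x ∂cube v := by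
      refine le_trans (le_abs_self _) ?_
      have hnorm := norm_integral_le_integral_norm (μ := cube v)
        (f := fun x : Fin v → ℝ => ∏ e ∈ G.edgeFinset, k (x e.inf) (x e.sup))
      rw [Real.norm_eq_abs] at hnorm
      refine le_trans hnorm (le_of_eq ?_)
      refine integral_congr_ae (Filter.Eventually.of_forall fun x => ?_)
      simp [hg, Finset.abs_prod]
    have hstep2 : ∫ x, g x ∂cube v = L.toReal := by
      rw [integral_eq_lintegral_of_nonneg_ae
        (Filter.Eventually.of_forall fun x => Finset.prod_nonneg fun e _ => abs_nonneg _)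
        hgmeas.aestronglyMeasurable]
      congr 1
      refine lintegral_congr fun x => ?_
      exact ENNReal.ofReal_prod_of_nonneg fun e _ => abs_nonneg _
    have hstep4 : A.toReal = ∫ p in S, |k p.1 p.2| ^ n := by
      rw [integral_eq_lintegral_of_nonneg_ae
        (Filter.Eventually.of_forall fun p => by positivity)
        ((Measurable.pow_const (f := fun p : ℝ × ℝ => |k p.1 p.2|)
          (hkMeas.abs) n).aestronglyMeasurable)]
    have hpow : ∀ p : ℝ × ℝ, |k p.1 p.2| ^ n = k p.1 p.2 ^ n := by
      rcases hsign with h | h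
      · intro p; rw [abs_of_nonneg (h _ _)]
      · intro p; exact h.pow_abs _
    calc homDensity G k ≤ ∫ x, g x ∂cube v := hstep1
      _ = L.toReal := hstep2
      _ ≤ A.toReal := ENNReal.toReal_mono hAlt hHolder
      _ = ∫ p in S, |k p.1 p.2| ^ n := hstep4
      _ = ∫ p in S, k p.1 p.2 ^ n := integral_congr_ae
            (Filter.Eventually.of_forall fun p => hpow p)
  · intro c
    simp only [homDensity, Finset.prod_const]
    rw [integral_const, setIntegral_const]
    rw [Measure.real, Measure.real, hvol]
    simp [Measure.real, hn]
end
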